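/- Let S, U, V, X₁, X₂, Y be jointly distributed random variables taking values in finite sets such that (U,V) ↔ (S,X₁,X₂) ↔ Y is a Markov chain, i.e., I(U,V ; Y | S,X₁,X₂) = 0. Then I(U,X₁ ; Y | V,X₂) - I(U,X₁ ; S | V,X₂) ≤ I(X₁ ; Y | V,X₂). -/

import Mathlib

open scoped BigOperators
open Classical

noncomputable section

/-- Probability that the random variable `X` equals `x` under the pmf `p`. -/
def pr {Ω α : Type*} [Fintype Ω] (p : Ω → ℝ) (X : Ω → α) (x : α) : ℝ :=
  ∑ ω : Ω, if X ω = x then p ω else 0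

/-- Shannon entropy (in bits), with the convention `0 · log₂ 0 = 0`. -/
def ent {Ω α : Type*} [Fintype Ω] (p : Ω → ℝ) (X : Ω → α) : ℝ :=
  -∑ x ∈ Finset.univ.image X, pr p X x * Real.logb 2 (pr p X x)

/-- Conditional entropy `H(X|Y) = H(X,Y) - H(Y)`. -/
def condEnt {Ω α β : Type*} [Fintype Ω] (p : Ω → ℝ) (X : Ω → α) (Y : Ω → β) : ℝ :=
  ent p (fun ω => (X ω, Y ω)) - ent p Y

/-- Mutual information `I(X;Y) = H(X) + H(Y) - H(X,Y)`. -/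
def mi {Ω α β : Type*} [Fintype Ω] (p : Ω → ℝ) (X : Ω → α) (Y : Ω → β) : ℝ :=
  ent p X + ent p Y - ent p (fun ω => (X ω, Y ω))

/-- Conditional mutual information `I(X;Y|Z) = H(X,Z) + H(Y,Z) - H(X,Y,Z) - H(Z)`. -/
def cmi {Ω α β γ : Type*} [Fintype Ω] (p : Ω → ℝ) (X : Ω → α) (Y : Ω → β) (Z : Ω → γ) : ℝ :=
  ent p (fun ω => (X ω, Z ω)) + ent p (fun ω => (Y ω, Z ω))
    - ent p (fun ω => (X ω, Y ω, Z ω)) - ent p Z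

/-- `p` is a probability mass function on the finite sample space `Ω`. -/
def IsPMF {Ω : Type*} [Fintype Ω] (p : Ω → ℝ) : Prop :=
  (∀ ω, 0 ≤ p ω) ∧ ∑ ω : Ω, p ω = 1

/-- The random variables `X` and `Y` are independent under `p`. -/
def IndepRV {Ω α β : Type*} [Fintype Ω] (p : Ω → ℝ) (X : Ω → α) (Y : Ω → β) : Prop :=
  ∀ x y, pr p (fun ω => (X ω, Y ω)) (x, y) = pr p X x * pr p Y y

end

noncomputable section

lemma pr_nonneg {Ω α : Type*} [Fintype Ω] {p : Ω → ℝ} (hp : IsPMF p) (X : Ω → α) (x : α) :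
    0 ≤ pr p X x :=
  Finset.sum_nonneg fun ω _ => by by_cases h : X ω = x <;> simp [h, hp.1 ω]

lemma pr_eq_zero {Ω α : Type*} [Fintype Ω] (p : Ω → ℝ) (X : Ω → α) {x : α}
    (hx : x ∉ Finset.univ.image X) : pr p X x = 0 :=
  Finset.sum_eq_zero fun ω _ => by
    rw [if_neg]; exact fun h => hx (Finset.mem_image.2 ⟨ω, Finset.mem_univ ω, h⟩)

lemma ent_eq {Ω α : Type*} [Fintype Ω] [Fintype α] (p : Ω → ℝ) (X : Ω → α) :
    ent p X = -∑ x : α, pr p X x * Real.logb 2 (pr p X x) := by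
  unfold ent
  congr 1
  exact Finset.sum_subset (Finset.subset_univ _)
    (fun x _ hx => by rw [pr_eq_zero p X hx]; simp)

lemma ent_congr {Ω α β : Type*} [Fintype Ω] (p : Ω → ℝ) {X : Ω → α} {Y : Ω → β}
    (f : α → β) (g : β → α) (hf : ∀ ω, f (X ω) = Y ω) (hg : ∀ ω, g (Y ω) = X ω) :
    ent p X = ent p Y := by
  have hgf : ∀ x ∈ Finset.univ.image X, g (f x) = x := by
    intro x hx
    obtain ⟨ω, -, rfl⟩ := Finset.mem_image.1 hx
    rw [hf, hg]
  have himg : Finset.univ.image Y = (Finset.univ.image X).image f := by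
    rw [Finset.image_image]
    congr 1
    funext ω
    exact (hf ω).symm
  have hpr : ∀ x ∈ Finset.univ.image X, pr p Y (f x) = pr p X x := by
    intro x hx
    unfold pr
    refine Finset.sum_congr rfl fun ω _ => ?_
    congr 1
    apply propext
    constructor
    · intro h
      rw [← hg ω, h, hgf x hx]
    · intro h
      rw [← hf ω, h]
  have hinj : ∀ a ∈ Finset.univ.image X, ∀ b ∈ Finset.univ.image X, f a = f b → a = b := by
    intro a ha b hb hab
    rw [← hgf a ha, hab, hgf b hb]
  unfold ent
  congr 1
  calc ∑ x ∈ Finset.univ.image X, pr p X x * Real.logb 2 (pr p X x)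
      = ∑ x ∈ Finset.univ.image X, pr p Y (f x) * Real.logb 2 (pr p Y (f x)) :=
        Finset.sum_congr rfl fun x hx => by rw [hpr x hx]
    _ = ∑ y ∈ (Finset.univ.image X).image f, pr p Y y * Real.logb 2 (pr p Y y) :=
        by rw [Finset.sum_image hinj]
    _ = ∑ y ∈ Finset.univ.image Y, pr p Y y * Real.logb 2 (pr p Y y) := by rw [himg]

lemma sum_pr {Ω α : Type*} [Fintype Ω] [Fintype α] {p : Ω → ℝ} (hp : IsPMF p) (X : Ω → α) :
    ∑ x : α, pr p X x = 1 := by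
  unfold pr
  rw [Finset.sum_comm]
  simp only [Finset.sum_ite_eq, Finset.mem_univ, if_true]
  exact hp.2

lemma cmi_nonneg {Ω α β γ : Type*} [Fintype Ω] [Fintype α] [Fintype β] [Fintype γ]
    {p : Ω → ℝ} (hp : IsPMF p) (X : Ω → α) (Y : Ω → β) (Z : Ω → γ) :
    0 ≤ cmi p X Y Z := by
  classical
  set q : α × β × γ → ℝ := pr p (fun ω => (X ω, Y ω, Z ω)) with hqdef
  set a : α × γ → ℝ := pr p (fun ω => (X ω, Z ω)) with hadef
  set b : β × γ → ℝ := pr p (fun ω => (Y ω, Z ω)) with hbdef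
  set r : γ → ℝ := pr p Z with hrdef
  have hq0 : ∀ t, 0 ≤ q t := fun t => pr_nonneg hp _ t
  have ha0 : ∀ v, 0 ≤ a v := fun v => pr_nonneg hp _ v
  have hb0 : ∀ w, 0 ≤ b w := fun w => pr_nonneg hp _ w
  have hr0 : ∀ z, 0 ≤ r z := fun z => pr_nonneg hp _ z
  -- marginals
  have hmarg_a : ∀ x z, a (x, z) = ∑ y, q (x, y, z) := by
    intro x z
    simp only [hadef, hqdef, pr]
    rw [Finset.sum_comm]
    refine Finset.sum_congr rfl fun ω _ => ?_
    by_cases h1 : X ω = x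
    · by_cases h3 : Z ω = z
      · simp [h1, h3, Finset.sum_ite_eq]
      · simp [h1, h3]
    · simp [h1]
  have hmarg_b : ∀ y z, b (y, z) = ∑ x, q (x, y, z) := by
    intro y z
    simp only [hbdef, hqdef, pr]
    rw [Finset.sum_comm]
    refine Finset.sum_congr rfl fun ω _ => ?_
    by_cases h2 : Y ω = y
    · by_cases h3 : Z ω = z
      · simp [h2, h3, Finset.sum_ite_eq]
      · simp [h2, h3]
    · simp [h2]
  have hra : ∀ z, r z = ∑ x, a (x, z) := by
    intro z
    simp only [hrdef, hadef, pr]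
    rw [Finset.sum_comm]
    refine Finset.sum_congr rfl fun ω _ => ?_
    by_cases h3 : Z ω = z
    · simp [h3, Finset.sum_ite_eq]
    · simp [h3]
  have hmarg_r : ∀ z, r z = ∑ x, ∑ y, q (x, y, z) := fun z => by
    rw [hra]
    exact Finset.sum_congr rfl fun x _ => hmarg_a x z
  have hsum_q : ∑ t : α × β × γ, q t = 1 := sum_pr hp _
  have hsum_r : ∑ z : γ, r z = 1 := sum_pr hp _
  have hq_le_a : ∀ x y z, q (x, y, z) ≤ a (x, z) := fun x y z => by
    rw [hmarg_a]
    exact Finset.single_le_sum (fun y' _ => hq0 (x, y', z)) (Finset.mem_univ y)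
  have hq_le_b : ∀ x y z, q (x, y, z) ≤ b (y, z) := fun x y z => by
    rw [hmarg_b]
    exact Finset.single_le_sum (fun x' _ => hq0 (x', y, z)) (Finset.mem_univ x)
  have ha_le_r : ∀ x z, a (x, z) ≤ r z := fun x z => by
    rw [hmarg_r]
    rw [hmarg_a]
    exact Finset.single_le_sum (f := fun x' => ∑ y, q (x', y, z))
      (fun x' _ => Finset.sum_nonneg fun y _ => hq0 _) (Finset.mem_univ x)
  have hb_le_r : ∀ y z, b (y, z) ≤ r z := fun y z => by
    rw [hmarg_r, Finset.sum_comm, hmarg_b]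
    exact Finset.single_le_sum (f := fun y' => ∑ x, q (x, y', z))
      (fun y' _ => Finset.sum_nonneg fun x _ => hq0 _) (Finset.mem_univ y)
  have hq_le_r : ∀ x y z, q (x, y, z) ≤ r z := fun x y z =>
    le_trans (hq_le_a x y z) (ha_le_r x z)
  have ha_margin : ∀ z, ∑ x, a (x, z) = r z := fun z => by
    rw [hmarg_r]
    exact Finset.sum_congr rfl fun x _ => hmarg_a x z
  have hb_margin : ∀ z, ∑ y, b (y, z) = r z := fun z => by
    rw [hmarg_r, Finset.sum_comm]
    exact Finset.sum_congr rfl fun y _ => hmarg_b y z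
  -- collapsing triple sums
  have collapse : ∀ G : α → β → γ → ℝ,
      (∑ x, ∑ y, ∑ z, G x y z) = ∑ t : α × β × γ, G t.1 t.2.1 t.2.2 := by
    intro G
    simp [Fintype.sum_prod_type]
  -- expansion of cmi as a single sum
  have hA : (∑ v : α × γ, a v * Real.logb 2 (a v))
      = ∑ x, ∑ y, ∑ z, q (x, y, z) * Real.logb 2 (a (x, z)) := by
    calc (∑ v : α × γ, a v * Real.logb 2 (a v))
        = ∑ x, ∑ z, a (x, z) * Real.logb 2 (a (x, z)) := by rw [Fintype.sum_prod_type]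
      _ = ∑ x, ∑ z, ∑ y, q (x, y, z) * Real.logb 2 (a (x, z)) :=
          Finset.sum_congr rfl fun x _ => Finset.sum_congr rfl fun z _ => by
            rw [hmarg_a, Finset.sum_mul]
      _ = ∑ x, ∑ y, ∑ z, q (x, y, z) * Real.logb 2 (a (x, z)) :=
          Finset.sum_congr rfl fun x _ => Finset.sum_comm
  have hB : (∑ w : β × γ, b w * Real.logb 2 (b w))
      = ∑ x, ∑ y, ∑ z, q (x, y, z) * Real.logb 2 (b (y, z)) := by
    calc (∑ w : β × γ, b w * Real.logb 2 (b w))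
        = ∑ y, ∑ z, b (y, z) * Real.logb 2 (b (y, z)) := by rw [Fintype.sum_prod_type]
      _ = ∑ y, ∑ z, ∑ x, q (x, y, z) * Real.logb 2 (b (y, z)) :=
          Finset.sum_congr rfl fun y _ => Finset.sum_congr rfl fun z _ => by
            rw [hmarg_b, Finset.sum_mul]
      _ = ∑ y, ∑ x, ∑ z, q (x, y, z) * Real.logb 2 (b (y, z)) :=
          Finset.sum_congr rfl fun y _ => Finset.sum_comm
      _ = ∑ x, ∑ y, ∑ z, q (x, y, z) * Real.logb 2 (b (y, z)) := Finset.sum_comm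
  have hR : (∑ z : γ, r z * Real.logb 2 (r z))
      = ∑ x, ∑ y, ∑ z, q (x, y, z) * Real.logb 2 (r z) := by
    calc (∑ z : γ, r z * Real.logb 2 (r z))
        = ∑ z, ∑ x, ∑ y, q (x, y, z) * Real.logb 2 (r z) :=
          Finset.sum_congr rfl fun z _ => by
            rw [hmarg_r, Finset.sum_mul]
            exact Finset.sum_congr rfl fun x _ => Finset.sum_mul _ _ _
      _ = ∑ x, ∑ z, ∑ y, q (x, y, z) * Real.logb 2 (r z) := Finset.sum_comm
      _ = ∑ x, ∑ y, ∑ z, q (x, y, z) * Real.logb 2 (r z) :=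
          Finset.sum_congr rfl fun x _ => Finset.sum_comm
  have hQ : (∑ t : α × β × γ, q t * Real.logb 2 (q t))
      = ∑ x, ∑ y, ∑ z, q (x, y, z) * Real.logb 2 (q (x, y, z)) := by
    simp [Fintype.sum_prod_type]
  have hcmi : cmi p X Y Z
      = ∑ x, ∑ y, ∑ z, q (x, y, z) *
          (Real.logb 2 (q (x, y, z)) + Real.logb 2 (r z)
            - Real.logb 2 (a (x, z)) - Real.logb 2 (b (y, z))) := by
    have hsplit : (∑ x, ∑ y, ∑ z, q (x, y, z) *
          (Real.logb 2 (q (x, y, z)) + Real.logb 2 (r z)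
            - Real.logb 2 (a (x, z)) - Real.logb 2 (b (y, z))))
        = (∑ x, ∑ y, ∑ z, q (x, y, z) * Real.logb 2 (q (x, y, z)))
          + (∑ x, ∑ y, ∑ z, q (x, y, z) * Real.logb 2 (r z))
          - (∑ x, ∑ y, ∑ z, q (x, y, z) * Real.logb 2 (a (x, z)))
          - (∑ x, ∑ y, ∑ z, q (x, y, z) * Real.logb 2 (b (y, z))) := by
      simp only [mul_add, mul_sub, Finset.sum_add_distrib, Finset.sum_sub_distrib]
    rw [cmi, ent_eq, ent_eq, ent_eq, ent_eq, hsplit]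
    rw [← hqdef, ← hadef, ← hbdef, ← hrdef, hA, hB, hR, hQ]
    ring
  -- single-sum form
  have hcmi1 : cmi p X Y Z
      = ∑ t : α × β × γ, q t *
          (Real.logb 2 (q t) + Real.logb 2 (r t.2.2)
            - Real.logb 2 (a (t.1, t.2.2)) - Real.logb 2 (b (t.2.1, t.2.2))) := by
    rw [hcmi, collapse (fun x y z => q (x, y, z) *
      (Real.logb 2 (q (x, y, z)) + Real.logb 2 (r z)
        - Real.logb 2 (a (x, z)) - Real.logb 2 (b (y, z))))]
  -- restrict to support
  set s : Finset (α × β × γ) := Finset.univ.filter (fun t => 0 < q t) with hsdef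
  have hqpos : ∀ t ∈ s, 0 < q t := fun t ht => (Finset.mem_filter.1 ht).2
  have hsum_s : ∑ t ∈ s, q t = 1 := by
    rw [hsdef, Finset.sum_filter_of_ne (fun t _ h => lt_of_le_of_ne (hq0 t) (Ne.symm h)),
      hsum_q]
  have hcmi2 : cmi p X Y Z
      = -∑ t ∈ s, q t * Real.logb 2
          (a (t.1, t.2.2) * b (t.2.1, t.2.2) / (q t * r t.2.2)) := by
    rw [hcmi1, ← Finset.sum_filter_of_ne
      (p := fun t => 0 < q t)
      (fun t _ h => lt_of_le_of_ne (hq0 t)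
        (by intro h0; exact h (by rw [← h0, zero_mul]))), ← hsdef]
    rw [← Finset.sum_neg_distrib]
    refine Finset.sum_congr rfl fun t ht => ?_
    have hqp : 0 < q t := hqpos t ht
    have hap : 0 < a (t.1, t.2.2) := lt_of_lt_of_le hqp (hq_le_a t.1 t.2.1 t.2.2)
    have hbp : 0 < b (t.2.1, t.2.2) := lt_of_lt_of_le hqp (hq_le_b t.1 t.2.1 t.2.2)
    have hrp : 0 < r t.2.2 := lt_of_lt_of_le hqp (hq_le_r t.1 t.2.1 t.2.2)
    rw [Real.logb_div (ne_of_gt (mul_pos hap hbp)) (ne_of_gt (mul_pos hqp hrp)),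
      Real.logb_mul (ne_of_gt hap) (ne_of_gt hbp),
      Real.logb_mul (ne_of_gt hqp) (ne_of_gt hrp)]
    ring
  -- the key bound on the sum of q * c
  have hqc : ∑ t ∈ s, q t * (a (t.1, t.2.2) * b (t.2.1, t.2.2) / (q t * r t.2.2)) ≤ 1 := by
    have step1 : ∀ t ∈ s, q t * (a (t.1, t.2.2) * b (t.2.1, t.2.2) / (q t * r t.2.2))
        = a (t.1, t.2.2) * b (t.2.1, t.2.2) / r t.2.2 := by
      intro t ht
      have hqp : (q t) ≠ 0 := ne_of_gt (hqpos t ht)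
      have hrp : r t.2.2 ≠ 0 :=
        ne_of_gt (lt_of_lt_of_le (hqpos t ht) (hq_le_r t.1 t.2.1 t.2.2))
      field_simp
    rw [Finset.sum_congr rfl step1]
    have hsub : ∑ t ∈ s, a (t.1, t.2.2) * b (t.2.1, t.2.2) / r t.2.2
        ≤ ∑ t : α × β × γ, a (t.1, t.2.2) * b (t.2.1, t.2.2) / r t.2.2 :=
      Finset.sum_le_sum_of_subset_of_nonneg (Finset.filter_subset _ _)
        (fun t _ _ => div_nonneg (mul_nonneg (ha0 _) (hb0 _)) (hr0 _))
    have hone : ∑ t : α × β × γ, a (t.1, t.2.2) * b (t.2.1, t.2.2) / r t.2.2 = 1 := by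
      rw [← collapse (fun x y z => a (x, z) * b (y, z) / r z)]
      have hz : ∀ z : γ, (∑ x, ∑ y, a (x, z) * b (y, z) / r z) = r z := by
        intro z
        by_cases hrz : r z = 0
        · have haz : ∀ x, a (x, z) = 0 := fun x =>
            le_antisymm (hrz ▸ ha_le_r x z) (ha0 _)
          simp [haz, hrz]
        · have h1 : ∀ x, (∑ y, a (x, z) * b (y, z) / r z) = a (x, z) * r z / r z := by
            intro x
            rw [← Finset.sum_div, ← Finset.mul_sum, hb_margin]
          rw [Finset.sum_congr rfl fun x _ => h1 x]
          have h2 : ∀ x, a (x, z) * r z / r z = a (x, z) := fun x => by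
            field_simp
          rw [Finset.sum_congr rfl fun x _ => h2 x, ha_margin]
      calc (∑ x, ∑ y, ∑ z, a (x, z) * b (y, z) / r z)
          = ∑ x, ∑ z, ∑ y, a (x, z) * b (y, z) / r z :=
            Finset.sum_congr rfl fun x _ => Finset.sum_comm
        _ = ∑ z, ∑ x, ∑ y, a (x, z) * b (y, z) / r z := Finset.sum_comm
        _ = ∑ z, r z := Finset.sum_congr rfl fun z _ => hz z
        _ = 1 := hsum_r
    linarith
  -- Jensen
  have hjensen : ∑ t ∈ s, q t * Real.log
      (a (t.1, t.2.2) * b (t.2.1, t.2.2) / (q t * r t.2.2)) ≤ 0 := by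
    set c : α × β × γ → ℝ :=
      fun t => a (t.1, t.2.2) * b (t.2.1, t.2.2) / (q t * r t.2.2) with hcdef
    have hcpos : ∀ t ∈ s, c t ∈ Set.Ioi (0 : ℝ) := by
      intro t ht
      have hqp : 0 < q t := hqpos t ht
      have hap : 0 < a (t.1, t.2.2) := lt_of_lt_of_le hqp (hq_le_a t.1 t.2.1 t.2.2)
      have hbp : 0 < b (t.2.1, t.2.2) := lt_of_lt_of_le hqp (hq_le_b t.1 t.2.1 t.2.2)
      have hrp : 0 < r t.2.2 := lt_of_lt_of_le hqp (hq_le_r t.1 t.2.1 t.2.2)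
      exact div_pos (mul_pos hap hbp) (mul_pos hqp hrp)
    have hjen := (strictConcaveOn_log_Ioi.concaveOn).le_map_sum
      (fun t _ => hq0 t) hsum_s hcpos
    simp only [smul_eq_mul] at hjen
    have hsum_c_nonneg : 0 ≤ ∑ t ∈ s, q t * c t :=
      Finset.sum_nonneg fun t ht => mul_nonneg (hq0 t) (le_of_lt (hcpos t ht))
    have hlog_le : Real.log (∑ t ∈ s, q t * c t) ≤ 0 :=
      Real.log_nonpos hsum_c_nonneg hqc
    exact le_trans hjen hlog_le
  have hfin : ∑ t ∈ s, q t * Real.logb 2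
      (a (t.1, t.2.2) * b (t.2.1, t.2.2) / (q t * r t.2.2)) ≤ 0 := by
    have heq : ∑ t ∈ s, q t * Real.logb 2
        (a (t.1, t.2.2) * b (t.2.1, t.2.2) / (q t * r t.2.2))
        = (∑ t ∈ s, q t * Real.log
            (a (t.1, t.2.2) * b (t.2.1, t.2.2) / (q t * r t.2.2))) / Real.log 2 := by
      rw [Finset.sum_div]
      exact Finset.sum_congr rfl fun t _ => by rw [Real.logb]; ring
    rw [heq]
    exact div_nonpos_of_nonpos_of_nonneg hjensen (Real.log_nonneg one_le_two)
  rw [hcmi2]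
  linarith


end

/-- If `(U,V) ↔ (S,X₁,X₂) ↔ Y` is a Markov chain, then
`I(U,X₁ ; Y | V,X₂) - I(U,X₁ ; S | V,X₂) ≤ I(X₁ ; Y | V,X₂)`. -/
theorem remove_aux_U_individual_rate
    {Ω 𝒮 𝒰 𝒱 𝒳₁ 𝒳₂ 𝒴 : Type*} [Fintype Ω] [Fintype 𝒮] [Fintype 𝒰] [Fintype 𝒱]
    [Fintype 𝒳₁] [Fintype 𝒳₂] [Fintype 𝒴]
    (p : Ω → ℝ) (hp : IsPMF p)
    (S : Ω → 𝒮) (U : Ω → 𝒰) (V : Ω → 𝒱) (X₁ : Ω → 𝒳₁) (X₂ : Ω → 𝒳₂) (Y : Ω → 𝒴)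
    (hMarkov : cmi p (fun ω => (U ω, V ω)) Y (fun ω => (S ω, X₁ ω, X₂ ω)) = 0) :
    cmi p (fun ω => (U ω, X₁ ω)) Y (fun ω => (V ω, X₂ ω))
        - cmi p (fun ω => (U ω, X₁ ω)) S (fun ω => (V ω, X₂ ω))
      ≤ cmi p X₁ Y (fun ω => (V ω, X₂ ω)) := by
  have N1 : 0 ≤ cmi p U S (fun ω => (Y ω, X₁ ω, V ω, X₂ ω)) := cmi_nonneg hp _ _ _
  have N2 : 0 ≤ cmi p X₁ S (fun ω => (V ω, X₂ ω)) := cmi_nonneg hp _ _ _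
  have N3 : 0 ≤ cmi p V Y (fun ω => (S ω, X₁ ω, X₂ ω)) := cmi_nonneg hp _ _ _
  have q1 : ent p (fun ω => ((U ω, X₁ ω), S ω, (V ω, X₂ ω)))
      = ent p (fun ω => ((U ω, V ω), S ω, X₁ ω, X₂ ω)) :=
    ent_congr p (fun t => ((t.1.1, t.2.2.1), t.2.1, t.1.2, t.2.2.2))
      (fun t => ((t.1.1, t.2.2.1), t.2.1, t.1.2, t.2.2.2))
      (fun ω => rfl) (fun ω => rfl)
  have q2 : ent p (fun ω => (X₁ ω, S ω, (V ω, X₂ ω)))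
      = ent p (fun ω => (V ω, S ω, X₁ ω, X₂ ω)) :=
    ent_congr p (fun t => (t.2.2.1, t.2.1, t.1, t.2.2.2))
      (fun t => (t.2.2.1, t.2.1, t.1, t.2.2.2))
      (fun ω => rfl) (fun ω => rfl)
  have q3 : ent p (fun ω => ((U ω, X₁ ω), Y ω, (V ω, X₂ ω)))
      = ent p (fun ω => (U ω, Y ω, X₁ ω, V ω, X₂ ω)) :=
    ent_congr p (fun t => (t.1.1, t.2.1, t.1.2, t.2.2))
      (fun t => ((t.1, t.2.2.1), t.2.1, t.2.2.2))
      (fun ω => rfl) (fun ω => rfl)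
  have q4 : ent p (fun ω => (S ω, Y ω, X₁ ω, V ω, X₂ ω))
      = ent p (fun ω => (V ω, Y ω, S ω, X₁ ω, X₂ ω)) :=
    ent_congr p (fun t => (t.2.2.2.1, t.2.1, t.1, t.2.2.1, t.2.2.2.2))
      (fun t => (t.2.2.1, t.2.1, t.2.2.2.1, t.1, t.2.2.2.2))
      (fun ω => rfl) (fun ω => rfl)
  have q5 : ent p (fun ω => (U ω, S ω, (Y ω, X₁ ω, V ω, X₂ ω)))
      = ent p (fun ω => ((U ω, V ω), Y ω, S ω, X₁ ω, X₂ ω)) :=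
    ent_congr p
      (fun t => ((t.1, t.2.2.2.2.1), t.2.2.1, t.2.1, t.2.2.2.1, t.2.2.2.2.2))
      (fun t => (t.1.1, t.2.2.1, t.2.1, t.2.2.2.1, t.1.2, t.2.2.2.2))
      (fun ω => rfl) (fun ω => rfl)
  have q6 : ent p (fun ω => (Y ω, X₁ ω, V ω, X₂ ω))
      = ent p (fun ω => (X₁ ω, Y ω, (V ω, X₂ ω))) :=
    ent_congr p (fun t => (t.2.1, t.1, t.2.2))
      (fun t => (t.2.1, t.1, t.2.2))
      (fun ω => rfl) (fun ω => rfl)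
  simp only [cmi] at hMarkov N1 N2 N3 ⊢
  linarith [q1, q2, q3, q4, q5, q6]
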